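/- In the standard form N-cube Adinkra, every two-colored 4-cycle has an odd number of dashed edges: for i < j and any vertex v ∈ (Z/2)^N, the sum π_i(v) + π_j(v + e_i) + π_i(v + e_j) + π_j(v) is odd, where π_i(x) = x_1 + x_2 + ⋯ + x_{i−1} (mod 2). -/

import Mathlib

/-- Standard form edge parity on the N-cube: `π i v = ∑_{l < i} v l` (mod 2). -/
def stdParity {N : ℕ} (i : Fin N) (v : Fin N → ZMod 2) : ZMod 2 :=
  ∑ l ∈ Finset.univ.filter (fun l => l < i), v l

lemma stdParity_add {N : ℕ} (i : Fin N) (v w : Fin N → ZMod 2) :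
    stdParity i (v + w) = stdParity i v + stdParity i w := by
  simp [stdParity, Finset.sum_add_distrib]

lemma stdParity_single {N : ℕ} (i k : Fin N) :
    stdParity i (Pi.single k 1) = if k < i then 1 else 0 := by
  unfold stdParity
  by_cases h : k < i
  · rw [Finset.sum_eq_single k]
    · simp [h]
    · intro b _ hb; simp [Pi.single_eq_of_ne hb]
    · simp [h]
  · rw [if_neg h]
    apply Finset.sum_eq_zero
    intro b hb
    simp only [Finset.mem_filter] at hb
    have : b ≠ k := fun e => h (e ▸ hb.2)
    simp [Pi.single_eq_of_ne this]

/-- Every two-colored 4-cycle of the standard form N-cube Adinkra has an odd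
number of dashed edges. -/
theorem std_four_cycle_odd (N : ℕ) (i j : Fin N) (hij : i < j) (v : Fin N → ZMod 2) :
    stdParity i v + stdParity j (v + Pi.single i 1) +
      stdParity i (v + Pi.single j 1) + stdParity j v = (1 : ZMod 2) := by
  rw [stdParity_add, stdParity_add, stdParity_single, stdParity_single,
    if_pos hij, if_neg (not_lt_of_gt hij)]
  ring_nf
  rw [show (2 : ZMod 2) = 0 by decide]
  ring
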